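/- Let G be the complete multipartite graph K_{2,3,3,...,3} with one part of size 2 and t − 1 ≥ 1 parts of size 3. Then the Roman bondage number of G equals 2. -/

import Mathlib

open SimpleGraph

/-- The Roman domination number: the minimum weight of a Roman dominating function,
i.e. a function `f : V → ℕ` with values in `{0,1,2}` such that every vertex with
value `0` has a neighbor with value `2`. -/
noncomputable def romanDominationNumber {V : Type*} [Fintype V] (G : SimpleGraph V) : ℕ :=
  sInf {w | ∃ f : V → ℕ, (∀ v, f v ≤ 2) ∧
    (∀ v, f v = 0 → ∃ u, G.Adj v u ∧ f u = 2) ∧ w = ∑ v, f v}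

/-- The Roman bondage number: the minimum cardinality of a set `B` of edges of `G`
whose removal increases the Roman domination number. -/
noncomputable def romanBondageNumber {V : Type*} [Fintype V] (G : SimpleGraph V) : ℕ :=
  sInf {k | ∃ B : Finset (Sym2 V), ↑B ⊆ G.edgeSet ∧ B.card = k ∧
    romanDominationNumber G < romanDominationNumber (G.deleteEdges ↑B)}

section general
variable {V : Type*} [Fintype V]

lemma rdn_nonempty (G : SimpleGraph V) :
    {w | ∃ f : V → ℕ, (∀ v, f v ≤ 2) ∧
      (∀ v, f v = 0 → ∃ u, G.Adj v u ∧ f u = 2) ∧ w = ∑ v, f v}.Nonempty :=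
  ⟨∑ v : V, 2, fun _ => 2, fun _ => le_refl _, fun v h => by simp at h, rfl⟩

lemma three_le_weight {G : SimpleGraph V} (hcard : 3 ≤ Fintype.card V)
    (hnu : ∀ v : V, ∃ w, w ≠ v ∧ ¬ G.Adj v w) {f : V → ℕ}
    (h1 : ∀ v, f v ≤ 2) (h2 : ∀ v, f v = 0 → ∃ u, G.Adj v u ∧ f u = 2) :
    3 ≤ ∑ v, f v := by
  classical
  by_contra hcon
  push_neg at hcon
  by_cases hv : ∃ v, f v = 2
  · obtain ⟨v, hv2⟩ := hv
    obtain ⟨w, hwv, hnadj⟩ := hnu v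
    have hpair : ∀ u : V, u ≠ v → f v + f u ≤ ∑ x, f x := by
      intro u hu
      calc f v + f u = ∑ x ∈ ({v, u} : Finset V), f x := by
            rw [Finset.sum_pair (Ne.symm hu)]
        _ ≤ ∑ x, f x := Finset.sum_le_sum_of_subset (Finset.subset_univ _)
    have hw0 : f w = 0 := by
      have := hpair w hwv; omega
    obtain ⟨u, hadj, hu2⟩ := h2 w hw0
    have huv : u ≠ v := fun h => hnadj (h ▸ hadj.symm)
    have := hpair u huv
    omega
  · push_neg at hv
    have hall : ∀ v, 1 ≤ f v := by
      intro v
      rcases Nat.eq_zero_or_pos (f v) with h0 | h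
      · obtain ⟨u, _, hu⟩ := h2 v h0
        exact absurd hu (hv u)
      · exact h
    have : Fintype.card V ≤ ∑ v, f v := by
      calc Fintype.card V = ∑ _v : V, 1 := by simp
        _ ≤ ∑ v, f v := Finset.sum_le_sum (fun v _ => hall v)
    omega

lemma four_le_weight {G : SimpleGraph V} (hcard : 4 ≤ Fintype.card V)
    (hnu : ∀ v : V, ∃ w1 w2, w1 ≠ w2 ∧ w1 ≠ v ∧ w2 ≠ v ∧ ¬ G.Adj v w1 ∧ ¬ G.Adj v w2)
    {f : V → ℕ}
    (h1 : ∀ v, f v ≤ 2) (h2 : ∀ v, f v = 0 → ∃ u, G.Adj v u ∧ f u = 2) :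
    4 ≤ ∑ v, f v := by
  classical
  by_contra hcon
  push_neg at hcon
  by_cases hv : ∃ v, f v = 2
  · obtain ⟨v, hv2⟩ := hv
    obtain ⟨w1, w2, h12, h1v, h2v, hna1, hna2⟩ := hnu v
    have hpair : ∀ u : V, u ≠ v → f v + f u ≤ ∑ x, f x := by
      intro u hu
      calc f v + f u = ∑ x ∈ ({v, u} : Finset V), f x := by
            rw [Finset.sum_pair (Ne.symm hu)]
        _ ≤ ∑ x, f x := Finset.sum_le_sum_of_subset (Finset.subset_univ _)
    have htriple : f v + f w1 + f w2 ≤ ∑ x, f x := by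
      calc f v + f w1 + f w2 = ∑ x ∈ ({v, w1, w2} : Finset V), f x := by
            rw [Finset.sum_insert (by simp [Ne.symm h1v, Ne.symm h2v]),
              Finset.sum_pair h12]
            ring
        _ ≤ ∑ x, f x := Finset.sum_le_sum_of_subset (Finset.subset_univ _)
    have hzero : f w1 = 0 ∨ f w2 = 0 := by omega
    have key : ∀ w : V, ¬ G.Adj v w → f w = 0 → False := by
      intro w hnadj hw0
      obtain ⟨u, hadj, hu2⟩ := h2 w hw0
      have huv : u ≠ v := fun h => hnadj (h ▸ hadj.symm)
      have := hpair u huv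
      omega
    rcases hzero with h | h
    · exact key w1 hna1 h
    · exact key w2 hna2 h
  · push_neg at hv
    have hall : ∀ v, 1 ≤ f v := by
      intro v
      rcases Nat.eq_zero_or_pos (f v) with h0 | h
      · obtain ⟨u, _, hu⟩ := h2 v h0
        exact absurd hu (hv u)
      · exact h
    have : Fintype.card V ≤ ∑ v, f v := by
      calc Fintype.card V = ∑ _v : V, 1 := by simp
        _ ≤ ∑ v, f v := Finset.sum_le_sum (fun v _ => hall v)
    omega

lemma exists_two_ne {α : Type*} [Fintype α] [DecidableEq α]
    (h : 3 ≤ Fintype.card α) (a : α) : ∃ b c : α, b ≠ c ∧ b ≠ a ∧ c ≠ a := by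
  have h2 : 1 < (Finset.univ.erase a).card := by
    rw [Finset.card_erase_of_mem (Finset.mem_univ a), Finset.card_univ]
    omega
  obtain ⟨b, hb, c, hc, hbc⟩ := Finset.one_lt_card.mp h2
  exact ⟨b, c, hbc, (Finset.mem_erase.mp hb).1, (Finset.mem_erase.mp hc).1⟩

end general


section specific

abbrev K233V (t : ℕ) := Σ j : Fin t, Fin (if (j : ℕ) = 0 then 2 else 3)

abbrev GK (t : ℕ) : SimpleGraph (K233V t) :=
  completeMultipartiteGraph (fun j : Fin t => Fin (if (j : ℕ) = 0 then 2 else 3))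

def va (t : ℕ) (ht : 2 ≤ t) : K233V t := ⟨⟨0, by omega⟩, ⟨0, by norm_num⟩⟩
def vb (t : ℕ) (ht : 2 ≤ t) : K233V t := ⟨⟨0, by omega⟩, ⟨1, by norm_num⟩⟩
def vx (t : ℕ) (ht : 2 ≤ t) : K233V t := ⟨⟨1, by omega⟩, ⟨0, by norm_num⟩⟩

variable {t : ℕ}

lemma GK_adj {v w : K233V t} : (GK t).Adj v w ↔ v.1 ≠ w.1 := Iff.rfl

lemma hab (ht : 2 ≤ t) : va t ht ≠ vb t ht := by
  intro h
  have := congrArg (fun v : K233V t => (v.2 : ℕ)) h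
  exact Nat.zero_ne_one this

lemma hax (ht : 2 ≤ t) : (va t ht).1 ≠ (vx t ht).1 := by
  simp [va, vx]

lemma hbx (ht : 2 ≤ t) : (vb t ht).1 ≠ (vx t ht).1 := by
  simp [vb, vx]

lemma part0 (ht : 2 ≤ t) (v : K233V t) (hv : (v.1 : ℕ) = 0) :
    v = va t ht ∨ v = vb t ht := by
  obtain ⟨⟨jv, hjlt⟩, i⟩ := v
  simp only at hv
  subst hv
  have hlt : (i : ℕ) < 2 := by
    have := i.isLt
    simpa using this
  have : (i : ℕ) = 0 ∨ (i : ℕ) = 1 := by omega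
  rcases this with h | h
  · exact Or.inl (congrArg (Sigma.mk _) (Fin.ext h))
  · exact Or.inr (congrArg (Sigma.mk _) (Fin.ext h))

lemma card_ge (ht : 2 ≤ t) : 4 ≤ Fintype.card (K233V t) := by
  rw [Fintype.card_sigma]
  have h2 : ∀ j : Fin t, 2 ≤ Fintype.card (Fin (if (j : ℕ) = 0 then 2 else 3)) := by
    intro j; rw [Fintype.card_fin]; split <;> omega
  calc (4 : ℕ) ≤ t * 2 := by omega
    _ = ∑ _j : Fin t, 2 := by
        simp [Finset.sum_const, Finset.card_univ, mul_comm]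
    _ ≤ ∑ j : Fin t, Fintype.card (Fin (if (j : ℕ) = 0 then 2 else 3)) :=
        Finset.sum_le_sum (fun j _ => h2 j)

lemma hnu1 (v : K233V t) : ∃ w, w ≠ v ∧ ¬ (GK t).Adj v w := by
  obtain ⟨j, i⟩ := v
  have hcard2 : 1 < Fintype.card (Fin (if (j : ℕ) = 0 then 2 else 3)) := by
    rw [Fintype.card_fin]; split <;> omega
  obtain ⟨i', hi'⟩ := Fintype.exists_ne_of_one_lt_card hcard2 i
  refine ⟨⟨j, i'⟩, ?_, ?_⟩
  · simp [hi']
  · exact fun h => h rfl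

end specific

lemma exists_mem_sym2 {α : Type*} (v w : α) : w ∈ s(v, w) := by simp

lemma rdn_le_three (ht : 2 ≤ t) (B : Finset (Sym2 (K233V t)))
    (hB : ↑B ⊆ (GK t).edgeSet) (hc : B.card ≤ 1) :
    romanDominationNumber ((GK t).deleteEdges ↑B) ≤ 3 := by
  classical
  set a := va t ht with ha_def
  set b := vb t ht with hb_def
  have habne : a ≠ b := hab ht
  have habe : ∀ e ∈ B, ¬(a ∈ e ∧ b ∈ e) := by
    rintro e he ⟨hae, hbe⟩
    have he' : e = s(a, b) := (Sym2.mem_and_mem_iff habne).mp ⟨hae, hbe⟩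
    have : (GK t).Adj a b := by
      rw [← SimpleGraph.mem_edgeSet, ← he']
      exact hB he
    exact this rfl
  have main : ∃ c d : K233V t, ((c = a ∧ d = b) ∨ (c = b ∧ d = a)) ∧
      ∀ e ∈ B, c ∉ e := by
    by_cases hca : ∀ e ∈ B, a ∉ e
    · exact ⟨a, b, Or.inl ⟨rfl, rfl⟩, hca⟩
    · push_neg at hca
      obtain ⟨e0, he0, hae0⟩ := hca
      refine ⟨b, a, Or.inr ⟨rfl, rfl⟩, ?_⟩
      intro e he hbe
      have heq : e = e0 := Finset.card_le_one.mp hc e he e0 he0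
      subst heq
      exact habe e he ⟨hae0, hbe⟩
  obtain ⟨c, d, hcd, hcB⟩ := main
  have hcd_ne : c ≠ d := by
    rcases hcd with ⟨h1, h2⟩ | ⟨h1, h2⟩ <;> subst h1 <;> subst h2
    · exact habne
    · exact habne.symm
  have hc1 : (c.1 : ℕ) = 0 := by
    rcases hcd with ⟨h1, _⟩ | ⟨h1, _⟩ <;> subst h1 <;> rfl
  set f : K233V t → ℕ := fun v => if v = c then 2 else if v = d then 1 else 0 with hf
  have h1 : ∀ v, f v ≤ 2 := by
    intro v
    simp only [hf]
    split
    · omega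
    · split <;> omega
  have h2 : ∀ v, f v = 0 → ∃ u, ((GK t).deleteEdges ↑B).Adj v u ∧ f u = 2 := by
    intro v hv0
    have hvc : v ≠ c := by intro h; subst h; simp [hf] at hv0
    have hvd : v ≠ d := by intro h; subst h; simp [hf, hcd_ne.symm] at hv0
    have hvnot : (v.1 : ℕ) ≠ 0 := by
      intro h0
      rcases part0 ht v h0 with h | h <;> rcases hcd with ⟨h1', h2'⟩ | ⟨h1', h2'⟩ <;>
        subst h1' <;> subst h2' <;> subst h <;> first | exact hvc rfl | exact hvd rfl
    refine ⟨c, ?_, by simp [hf]⟩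
    rw [SimpleGraph.deleteEdges_adj]
    constructor
    · exact fun h => hvnot (h ▸ hc1)
    · intro hmem
      exact hcB _ (Finset.mem_coe.mp hmem) (exists_mem_sym2 v c)
  have hsum : ∑ v, f v = 3 := by
    rw [← Finset.sum_subset (Finset.subset_univ ({c, d} : Finset (K233V t)))
      (by intro y _ hy
          simp only [Finset.mem_insert, Finset.mem_singleton, not_or] at hy
          simp [hf, hy.1, hy.2])]
    rw [Finset.sum_pair hcd_ne]
    simp [hf, hcd_ne.symm]
  calc romanDominationNumber ((GK t).deleteEdges ↑B) ≤ ∑ v, f v :=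
        Nat.sInf_le ⟨f, h1, h2, rfl⟩
    _ = 3 := hsum

lemma hnu2 (ht : 2 ≤ t) (v : K233V t) :
    ∃ w1 w2, w1 ≠ w2 ∧ w1 ≠ v ∧ w2 ≠ v ∧
      ¬ ((GK t).deleteEdges ↑({s(va t ht, vx t ht), s(vb t ht, vx t ht)} :
          Finset (Sym2 (K233V t)))).Adj v w1 ∧
      ¬ ((GK t).deleteEdges ↑({s(va t ht, vx t ht), s(vb t ht, vx t ht)} :
          Finset (Sym2 (K233V t)))).Adj v w2 := by
  classical
  set a := va t ht
  set b := vb t ht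
  set x := vx t ht
  have haxne : a ≠ x := fun h => hax ht (congrArg Sigma.fst h)
  have hbxne : b ≠ x := fun h => hbx ht (congrArg Sigma.fst h)
  by_cases hj : (v.1 : ℕ) = 0
  · rcases part0 ht v hj with rfl | rfl
    · refine ⟨b, x, hbxne, (hab ht).symm, haxne.symm, ?_, ?_⟩
      · rw [SimpleGraph.deleteEdges_adj]
        rintro ⟨h, -⟩
        exact h rfl
      · rw [SimpleGraph.deleteEdges_adj]
        rintro ⟨-, h⟩
        exact h (by simp [a])
    · refine ⟨a, x, haxne, hab ht, hbxne.symm, ?_, ?_⟩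
      · rw [SimpleGraph.deleteEdges_adj]
        rintro ⟨h, -⟩
        exact h rfl
      · rw [SimpleGraph.deleteEdges_adj]
        rintro ⟨-, h⟩
        exact h (by simp [b])
  · obtain ⟨j, i⟩ := v
    simp only at hj
    have hcard3 : 3 ≤ Fintype.card (Fin (if (j : ℕ) = 0 then 2 else 3)) := by
      rw [Fintype.card_fin, if_neg hj]
    obtain ⟨i1, i2, h12, h1i, h2i⟩ := exists_two_ne hcard3 i
    refine ⟨⟨j, i1⟩, ⟨j, i2⟩, by simp [h12], by simp [h1i], by simp [h2i], ?_, ?_⟩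
    · rw [SimpleGraph.deleteEdges_adj]
      rintro ⟨h, -⟩
      exact h rfl
    · rw [SimpleGraph.deleteEdges_adj]
      rintro ⟨h, -⟩
      exact h rfl

theorem roman_bondage_K233_aux
    (t : ℕ) (ht : 2 ≤ t) :
    romanBondageNumber
      (completeMultipartiteGraph
        (fun j : Fin t => Fin (if (j : ℕ) = 0 then 2 else 3))) = 2 := by
  classical
  set a := va t ht
  set b := vb t ht
  set x := vx t ht
  have haxne : a ≠ x := fun h => hax ht (congrArg Sigma.fst h)
  have hbxne : b ≠ x := fun h => hbx ht (congrArg Sigma.fst h)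
  set B2 : Finset (Sym2 (K233V t)) := {s(a, x), s(b, x)} with hB2
  -- lower bound on γ_R(G)
  have h3low : 3 ≤ romanDominationNumber (GK t) := by
    refine le_csInf (rdn_nonempty _) ?_
    rintro w ⟨f, h1, h2, rfl⟩
    exact three_le_weight (by have := card_ge ht; omega) hnu1 h1 h2
  -- upper bound on γ_R(G)
  have h3up : romanDominationNumber (GK t) ≤ 3 := by
    have := rdn_le_three ht ∅ (by simp) (by simp)
    simpa using this
  -- edges of B2 are distinct
  have hedgene : s(a, x) ≠ s(b, x) := by
    intro h
    rw [Sym2.eq_iff] at h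
    rcases h with ⟨h1, -⟩ | ⟨h1, -⟩
    · exact hab ht h1
    · exact haxne h1
  have hcard2 : B2.card = 2 := by
    rw [hB2, Finset.card_insert_of_notMem (by simp [hedgene]), Finset.card_singleton]
  have hsub : ↑B2 ⊆ (GK t).edgeSet := by
    intro e he
    simp only [hB2, Finset.coe_insert, Finset.coe_singleton, Set.mem_insert_iff,
      Set.mem_singleton_iff] at he
    rcases he with rfl | rfl
    · exact hax ht
    · exact hbx ht
  -- lower bound on γ_R(G - B2)
  have h4 : 4 ≤ romanDominationNumber ((GK t).deleteEdges ↑B2) := by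
    refine le_csInf (rdn_nonempty _) ?_
    rintro w ⟨f, h1, h2, rfl⟩
    exact four_le_weight (card_ge ht) (hnu2 ht) h1 h2
  have mem2 : 2 ∈ {k | ∃ B : Finset (Sym2 (K233V t)), ↑B ⊆ (GK t).edgeSet ∧ B.card = k ∧
      romanDominationNumber (GK t) < romanDominationNumber ((GK t).deleteEdges ↑B)} :=
    ⟨B2, hsub, hcard2, by omega⟩
  have lowerS : ∀ k ∈ {k | ∃ B : Finset (Sym2 (K233V t)), ↑B ⊆ (GK t).edgeSet ∧ B.card = k ∧
      romanDominationNumber (GK t) < romanDominationNumber ((GK t).deleteEdges ↑B)}, 2 ≤ k := by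
    rintro k ⟨B, hBsub, hBcard, hlt⟩
    by_contra hk
    push_neg at hk
    have hle : romanDominationNumber ((GK t).deleteEdges ↑B) ≤ 3 :=
      rdn_le_three ht B hBsub (by omega)
    omega
  exact le_antisymm (Nat.sInf_le mem2) (le_csInf ⟨2, mem2⟩ lowerS)

/-- The complete multipartite graph `K_{2,3,…,3}` with one part of size `2` and
`t - 1 ≥ 1` parts of size `3` has Roman bondage number `2`. -/
theorem roman_bondage_K233
    (t : ℕ) (ht : 2 ≤ t) :
    romanBondageNumber
      (completeMultipartiteGraph
        (fun j : Fin t => Fin (if (j : ℕ) = 0 then 2 else 3))) = 2 := by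
  exact roman_bondage_K233_aux t ht
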